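/- Let (A, ∧, δ, Δ, [·•·]) be a dGBV algebra with an integral ∫, and let a ∈ A₀ be an even element satisfying δa + (1/2)[a•a] = 0 and Δa = 0. Then ∫ is also an integral for the deformed dGBV algebra (A, ∧, δ_a, Δ, [·•·]); in particular, for all homogeneous b, c ∈ A one has ∫ (δ_a b) ∧ c = (−1)^{|b|+1} ∫ b ∧ (δ_a c), where δ_a := δ + [a•·]. -/

import Mathlib

/-- The bracket generated by the odd operator `Δ` on a `ℤ₂`-graded algebra:
for `a` homogeneous of degree `i`,
`[a • b] = (−1)^{|a|} (Δ(a ∧ b) − (Δa) ∧ b − (−1)^{|a|} a ∧ Δb)`. -/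
noncomputable def dgbvBracket {k A : Type*} [Field k] [Ring A] [Algebra k A]
    (Δ : A →ₗ[k] A) (i : ZMod 2) (a b : A) : A :=
  ((-1 : k) ^ i.val) • (Δ (a * b) - Δ a * b - ((-1 : k) ^ i.val) • (a * Δ b))

/-- A differential Gerstenhaber–Batalin–Vilkovisky (dGBV) algebra over a field `k`
of characteristic zero: a `ℤ₂`-graded supercommutative associative unital `k`-algebra
`A` together with odd operators `δ`, `Δ` such that `δ² = Δ² = 0`, `δΔ + Δδ = 0`,
`δ` is an odd derivation of the product, and the bracket generated by `Δ` satisfies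
the odd Poisson (Leibniz) identity. -/
structure DGBV (k : Type*) [Field k] [CharZero k] (A : Type*) [Ring A] [Algebra k A] where
  grading : ZMod 2 → Submodule k A
  gradedAlgebra : GradedAlgebra grading
  supercomm : ∀ (i j : ZMod 2), ∀ a ∈ grading i, ∀ b ∈ grading j,
    a * b = ((-1 : k) ^ (i.val * j.val)) • (b * a)
  δ : A →ₗ[k] A
  Δ : A →ₗ[k] A
  δ_odd : ∀ (i : ZMod 2), ∀ a ∈ grading i, δ a ∈ grading (i + 1)
  Δ_odd : ∀ (i : ZMod 2), ∀ a ∈ grading i, Δ a ∈ grading (i + 1)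
  δ_sq : ∀ a : A, δ (δ a) = 0
  Δ_sq : ∀ a : A, Δ (Δ a) = 0
  δΔ_anticomm : ∀ a : A, δ (Δ a) + Δ (δ a) = 0
  δ_derivation : ∀ (i : ZMod 2), ∀ a ∈ grading i, ∀ (j : ZMod 2), ∀ b ∈ grading j,
    δ (a * b) = δ a * b + ((-1 : k) ^ i.val) • (a * δ b)
  bracket_derivation : ∀ (i j : ZMod 2), ∀ a ∈ grading i, ∀ b ∈ grading j,
    ∀ (l : ZMod 2), ∀ c ∈ grading l,
    dgbvBracket Δ i a (b * c) =
      dgbvBracket Δ i a b * c + ((-1 : k) ^ ((i + 1).val * j.val)) • (b * dgbvBracket Δ i a c)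

/-- If `∫` is an integral on a dGBV algebra and `a` is an even element satisfying
`δa + (1/2)[a•a] = 0` and `Δa = 0`, then `∫` is also an integral for the deformed dGBV
algebra with differential `δ_a = δ + [a•·]`; in particular
`∫ (δ_a b) ∧ c = (−1)^{|b|+1} ∫ b ∧ (δ_a c)` for homogeneous `b, c`. -/
theorem dgbv_integral_for_deformed {k A : Type*} [Field k] [CharZero k] [Ring A] [Algebra k A]
    (D : DGBV k A) (f : A →ₗ[k] k)
    (hEven : ∀ a ∈ D.grading 1, f a = 0)
    (hδInt : ∀ (i : ZMod 2), ∀ a ∈ D.grading i, ∀ (j : ZMod 2), ∀ b ∈ D.grading j,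
      f (D.δ a * b) = (-1 : k) ^ (i + 1).val * f (a * D.δ b))
    (hΔInt : ∀ (i : ZMod 2), ∀ a ∈ D.grading i, ∀ (j : ZMod 2), ∀ b ∈ D.grading j,
      f (D.Δ a * b) = (-1 : k) ^ i.val * f (a * D.Δ b))
    (a : A) (ha : a ∈ D.grading 0)
    (hMC : D.δ a + (1 / 2 : k) • dgbvBracket D.Δ 0 a a = 0) (hΔa : D.Δ a = 0) :
    ∀ (j : ZMod 2), ∀ b ∈ D.grading j, ∀ (l : ZMod 2), ∀ c ∈ D.grading l,
      f ((D.δ b + dgbvBracket D.Δ 0 a b) * c) =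
        (-1 : k) ^ (j + 1).val * f (b * (D.δ c + dgbvBracket D.Δ 0 a c)) := by
    classical
  intro j b hb l c hc
  haveI := D.gradedAlgebra
  have hab : a * b ∈ D.grading j := by
    have := SetLike.mul_mem_graded ha hb
    simpa using this
  have hac : a * c ∈ D.grading l := by
    have := SetLike.mul_mem_graded ha hc
    simpa using this
  have hΔb : D.Δ b ∈ D.grading (j + 1) := D.Δ_odd j b hb
  -- bracket simplification (i = 0)
  have hbr : ∀ x : A, dgbvBracket D.Δ 0 a x = D.Δ (a * x) - a * D.Δ x := by
    intro x
    simp [dgbvBracket, hΔa]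
  -- sign
  have hs : ((-1 : k)) ^ (j + 1).val = -(-1 : k) ^ j.val := by
    fin_cases j
    · change (-1:k) ^ ((0:ZMod 2) + 1).val = -(-1:k) ^ (0:ZMod 2).val
      rw [show ((0:ZMod 2)+1).val = 1 from rfl, show (0:ZMod 2).val = 0 from rfl]; norm_num
    · change (-1:k) ^ ((1:ZMod 2) + 1).val = -(-1:k) ^ (1:ZMod 2).val
      rw [show ((1:ZMod 2)+1).val = 0 from rfl, show (1:ZMod 2).val = 1 from rfl]; norm_num
  -- commutation facts
  have hcomm1 : a * D.Δ b = D.Δ b * a := by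
    have := D.supercomm 0 (j + 1) a ha (D.Δ b) hΔb
    simpa using this
  have hcomm2 : b * a = a * b := by
    have := D.supercomm j 0 b hb a ha
    simpa using this
  -- integral identities
  have h1 : f (D.δ b * c) = (-1 : k) ^ (j + 1).val * f (b * D.δ c) :=
    hδInt j b hb l c hc
  have h2 : f (D.Δ (a * b) * c) = (-1 : k) ^ j.val * f ((a * b) * D.Δ c) :=
    hΔInt j (a * b) hab l c hc
  have h4 : f (D.Δ b * (a * c)) = (-1 : k) ^ j.val * f (b * D.Δ (a * c)) :=
    hΔInt j b hb l (a * c) hac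
  have h3 : (a * D.Δ b) * c = D.Δ b * (a * c) := by rw [hcomm1, mul_assoc]
  have h5 : b * (a * D.Δ c) = (a * b) * D.Δ c := by rw [← mul_assoc, hcomm2]
  rw [hbr, hbr]
  rw [add_mul, sub_mul, mul_add, mul_sub, h3, h5]
  simp only [map_add, map_sub, h1, h2, h4, hs]
  ring
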